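/- Let v : ℤ → ℤ × ℤ satisfy the three-helical recursion and suppose χ(v(i), v(j)) > 0 whenever i < j. Set Δᵢ := χ(v(i−1), v(i)). Then either (i) Δ₁² + Δ₂² + Δ₃² = Δ₁Δ₂Δ₃ and there exists a constant C > 0 such that χ(v(i), v(j)) ≤ C·(1 + (j−i)²) for all i < j (polynomial growth), or (ii) there exist j ∈ {0,1,2}, a real number c > 1 and N ∈ ℕ such that χ(v(j), v(j+3n)) ≥ cⁿ for all n ≥ N (exponential growth). -/

import Mathlib

/-- The Euler pairing on `K₀(X) ≅ ℤ × ℤ`, with `u = (deg, rk)`: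
`χ(u, w) = d'·r − d·r'`. -/
def chi (u w : ℤ × ℤ) : ℤ := w.1 * u.2 - u.1 * w.2

/-- A sequence `v : ℤ → ℤ × ℤ` satisfies the three-helical recursion. -/
def ThreeHelical (v : ℤ → ℤ × ℤ) : Prop :=
  ∀ i : ℤ, v (i + 3) = v i - chi (v i) (v (i + 1)) • v (i + 1) +
    (chi (v i) (v (i + 1)) * chi (v (i + 1)) (v (i + 2)) - chi (v i) (v (i + 2))) • v (i + 2)

lemma chi_self (u : ℤ × ℤ) : chi u u = 0 := by simp [chi]

lemma chi_skew (u w : ℤ × ℤ) : chi u w = - chi w u := by simp [chi]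

lemma one_le_of_pos {x : ℤ} (h : 0 < x) : 1 ≤ x := h

lemma chi_expand (u x y z : ℤ × ℤ) (s t : ℤ) :
    chi u (x - s • y + t • z) = chi u x - s * chi u y + t * chi u z := by
  simp [chi, Prod.fst_add, Prod.fst_sub, Prod.smul_fst, Prod.snd_add, Prod.snd_sub,
    Prod.smul_snd, smul_eq_mul]; ring

lemma chi_comb (u p q r : ℤ × ℤ) (k : ℤ) :
    chi u (p + q - k • r) = chi u p + chi u q - k * chi u r := by
  simp [chi, Prod.fst_add, Prod.fst_sub, Prod.smul_fst, Prod.snd_add, Prod.snd_sub,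
    Prod.smul_snd, smul_eq_mul]; ring

lemma chi_add_smul (u x y z : ℤ × ℤ) (k : ℤ) (hxyz : x + y = k • z) :
    chi u x + chi u y = k * chi u z := by
  have h1 := congrArg Prod.fst hxyz
  have h2 := congrArg Prod.snd hxyz
  simp only [Prod.fst_add, Prod.snd_add, Prod.smul_fst, Prod.smul_snd, smul_eq_mul] at h1 h2
  simp only [chi]
  linear_combination u.2 * h1 - u.1 * h2

lemma chi_zero_of (u w x : ℤ × ℤ) (hu : chi u x = 0) (hw : chi w x = 0)
    (huw : chi u w ≠ 0) : x = 0 := by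
  simp only [chi] at hu hw huw
  have h1 : x.1 * (w.1 * u.2 - u.1 * w.2) = 0 := by linear_combination w.1 * hu - u.1 * hw
  have h2 : x.2 * (w.1 * u.2 - u.1 * w.2) = 0 := by linear_combination w.2 * hu - u.2 * hw
  have e1 : x.1 = 0 := (mul_eq_zero.mp h1).resolve_right huw
  have e2 : x.2 = 0 := (mul_eq_zero.mp h2).resolve_right huw
  exact Prod.ext e1 e2
section Struct
variable (v : ℤ → ℤ × ℤ)

lemma hstep' (h : ThreeHelical v) (w : ℤ × ℤ) (m : ℤ) :
    chi w (v (m+3)) = chi w (v m) - chi (v m) (v (m+1)) * chi w (v (m+1)) +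
      (chi (v m) (v (m+1)) * chi (v (m+1)) (v (m+2)) - chi (v m) (v (m+2))) * chi w (v (m+2)) := by
  rw [h m, chi_expand]

lemma hcoeff (h : ThreeHelical v) (m : ℤ) :
    chi (v (m+2)) (v (m+3)) =
      chi (v m) (v (m+1)) * chi (v (m+1)) (v (m+2)) - chi (v m) (v (m+2)) := by
  rw [hstep' v h (v (m+2)) m]
  simp only [chi]; ring

lemma hstep (h : ThreeHelical v) (w : ℤ × ℤ) (m : ℤ) :
    chi w (v (m+3)) = chi w (v m) - chi (v m) (v (m+1)) * chi w (v (m+1)) +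
      chi (v (m+2)) (v (m+3)) * chi w (v (m+2)) := by
  rw [hcoeff v h m]; exact hstep' v h w m

/-- step with explicit normalized indices -/
lemma hstepE (h : ThreeHelical v) (w : ℤ × ℤ) (m x1 x2 x3 : ℤ) (e1 : x1 = m + 1) (e2 : x2 = m + 2) (e3 : x3 = m + 3) :
    chi w (v x3) = chi w (v m) - chi (v m) (v x1) * chi w (v x1) +
      chi (v x2) (v x3) * chi w (v x2) := by
  subst e1; subst e2; subst e3; exact hstep v h w m

lemma hperiod (h : ThreeHelical v) (m : ℤ) : chi (v (m+3)) (v (m+4)) = chi (v m) (v (m+1)) := by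
  have hb := hstep v h (v (m+1)) m
  rw [chi_skew (v (m+1)) (v m), chi_self] at hb
  have hc := hcoeff v h (m+1)
  simp only [show (m+1+2 : ℤ) = m+3 from by ring, show (m+1+3 : ℤ) = m+4 from by ring,
    show (m+1+1 : ℤ) = m+2 from by ring] at hc
  rw [hb] at hc
  rw [hc]; ring

lemma hperiodE (h : ThreeHelical v) (m x y u w : ℤ) (hx : x = m + 3) (hy : y = m + 4) (hu : u = m) (hw : w = m + 1) :
    chi (v x) (v y) = chi (v u) (v w) := by
  subst hx; subst hy; subst hu; subst hw; apply hperiod v h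

end Struct
lemma vec6 (v : ℤ → ℤ × ℤ) (h : ThreeHelical v) (m : ℤ)
    (hA : chi (v m) (v (m+1)) ≠ 0) :
    v (m+6) + v m =
      (chi (v m) (v (m+1)) * chi (v (m+1)) (v (m+2)) * chi (v (m+2)) (v (m+3)) -
        (chi (v m) (v (m+1))^2 + chi (v (m+1)) (v (m+2))^2 + chi (v (m+2)) (v (m+3))^2) + 2) •
        v (m+3) := by
  have pA : chi (v (m+3)) (v (m+4)) = chi (v m) (v (m+1)) :=
    hperiodE v h m _ _ _ _ rfl rfl rfl rfl
  have pB : chi (v (m+4)) (v (m+5)) = chi (v (m+1)) (v (m+2)) :=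
    hperiodE v h (m+1) _ _ _ _ (by ring) (by ring) rfl (by ring)
  have pC : chi (v (m+5)) (v (m+6)) = chi (v (m+2)) (v (m+3)) :=
    hperiodE v h (m+2) _ _ _ _ (by ring) (by ring) rfl (by ring)
  have hv0 : chi (v m) (v m) = 0 := chi_self _
  have hv2 : chi (v m) (v (m+2)) =
      chi (v m) (v (m+1)) * chi (v (m+1)) (v (m+2)) - chi (v (m+2)) (v (m+3)) := by
    have := hcoeff v h m; linarith
  have e3 := hstepE v h (v m) m (m+1) (m+2) (m+3) rfl rfl rfl
  have e4 := hstepE v h (v m) (m+1) (m+2) (m+3) (m+4) (by ring) (by ring) (by ring)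
  have e5 := hstepE v h (v m) (m+2) (m+3) (m+4) (m+5) (by ring) (by ring) (by ring)
  have e6 := hstepE v h (v m) (m+3) (m+4) (m+5) (m+6) (by ring) (by ring) (by ring)
  rw [pA] at e4 e6
  rw [pB] at e5
  rw [pC] at e6
  rw [hv0, hv2] at e3
  rw [hv2] at e4 e5
  rw [e3] at e4 e5 e6
  rw [e4] at e5 e6
  rw [e5] at e6
  have sA : chi (v m) (v (m+6)) + chi (v m) (v m) =
      (chi (v m) (v (m+1)) * chi (v (m+1)) (v (m+2)) * chi (v (m+2)) (v (m+3)) -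
        (chi (v m) (v (m+1))^2 + chi (v (m+1)) (v (m+2))^2 + chi (v (m+2)) (v (m+3))^2) + 2) *
        chi (v m) (v (m+3)) := by
    rw [e6, e3, hv0]; ring
  have hw0 : chi (v (m+1)) (v m) = - chi (v m) (v (m+1)) := chi_skew _ _
  have hw1 : chi (v (m+1)) (v (m+1)) = 0 := chi_self _
  have f3 := hstepE v h (v (m+1)) m (m+1) (m+2) (m+3) rfl rfl rfl
  have f4 := hstepE v h (v (m+1)) (m+1) (m+2) (m+3) (m+4) (by ring) (by ring) (by ring)
  have f5 := hstepE v h (v (m+1)) (m+2) (m+3) (m+4) (m+5) (by ring) (by ring) (by ring)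
  have f6 := hstepE v h (v (m+1)) (m+3) (m+4) (m+5) (m+6) (by ring) (by ring) (by ring)
  rw [pA] at f4 f6
  rw [pB] at f5
  rw [pC] at f6
  rw [hw0, hw1] at f3
  rw [hw1] at f4
  rw [f3] at f4 f5 f6
  rw [f4] at f5 f6
  rw [f5] at f6
  have sB : chi (v (m+1)) (v (m+6)) + chi (v (m+1)) (v m) =
      (chi (v m) (v (m+1)) * chi (v (m+1)) (v (m+2)) * chi (v (m+2)) (v (m+3)) -
        (chi (v m) (v (m+1))^2 + chi (v (m+1)) (v (m+2))^2 + chi (v (m+2)) (v (m+3))^2) + 2) *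
        chi (v (m+1)) (v (m+3)) := by
    rw [f6, f3, hw0]; ring
  have hx1 : chi (v m) (v (m+6) + v m -
      (chi (v m) (v (m+1)) * chi (v (m+1)) (v (m+2)) * chi (v (m+2)) (v (m+3)) -
        (chi (v m) (v (m+1))^2 + chi (v (m+1)) (v (m+2))^2 + chi (v (m+2)) (v (m+3))^2) + 2) •
        v (m+3)) = 0 := by
    rw [chi_comb]; linarith [sA]
  have hx2 : chi (v (m+1)) (v (m+6) + v m -
      (chi (v m) (v (m+1)) * chi (v (m+1)) (v (m+2)) * chi (v (m+2)) (v (m+3)) -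
        (chi (v m) (v (m+1))^2 + chi (v (m+1)) (v (m+2))^2 + chi (v (m+2)) (v (m+3))^2) + 2) •
        v (m+3)) = 0 := by
    rw [chi_comb]; linarith [sB]
  exact sub_eq_zero.mp (chi_zero_of (v m) (v (m+1)) _ hx1 hx2 hA)
lemma Kstep (v : ℤ → ℤ × ℤ) (h : ThreeHelical v) (m : ℤ) :
    chi (v (m+1)) (v (m+1+1)) * chi (v (m+1+1)) (v (m+1+2)) * chi (v (m+1+2)) (v (m+1+3)) -
      (chi (v (m+1)) (v (m+1+1))^2 + chi (v (m+1+1)) (v (m+1+2))^2 + chi (v (m+1+2)) (v (m+1+3))^2)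
    = chi (v m) (v (m+1)) * chi (v (m+1)) (v (m+2)) * chi (v (m+2)) (v (m+3)) -
      (chi (v m) (v (m+1))^2 + chi (v (m+1)) (v (m+2))^2 + chi (v (m+2)) (v (m+3))^2) := by
  simp only [show (m+1+1 : ℤ) = m+2 from by ring, show (m+1+2 : ℤ) = m+3 from by ring,
    show (m+1+3 : ℤ) = m+4 from by ring]
  rw [hperiodE v h m (m+3) (m+4) m (m+1) rfl rfl rfl rfl]
  ring

lemma Kconst (v : ℤ → ℤ × ℤ) (h : ThreeHelical v) : ∀ m : ℤ,
    chi (v m) (v (m+1)) * chi (v (m+1)) (v (m+2)) * chi (v (m+2)) (v (m+3)) -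
      (chi (v m) (v (m+1))^2 + chi (v (m+1)) (v (m+2))^2 + chi (v (m+2)) (v (m+3))^2)
    = chi (v 0) (v 1) * chi (v 1) (v 2) * chi (v 2) (v 3) -
      (chi (v 0) (v 1)^2 + chi (v 1) (v 2)^2 + chi (v 2) (v 3)^2) := by
  intro m
  induction m using Int.induction_on with
  | zero => norm_num
  | succ i ih => rw [Kstep v h (i:ℤ)]; exact ih
  | pred i ih =>
      rw [← Kstep v h (-(i:ℤ)-1)]
      simp only [show (-(i:ℤ)-1+1 : ℤ) = -(i:ℤ) from by ring]
      exact ih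

lemma aval3 (v : ℤ → ℤ × ℤ) (h : ThreeHelical v) : ∀ k : ℤ,
    chi (v (3*k)) (v (3*k+1)) = chi (v 0) (v 1) ∧
    chi (v (3*k+1)) (v (3*k+2)) = chi (v 1) (v 2) ∧
    chi (v (3*k+2)) (v (3*k+3)) = chi (v 2) (v 3) := by
  intro k
  induction k using Int.induction_on with
  | zero => norm_num
  | succ i ih =>
      have q1 : chi (v (3*((i:ℤ)+1))) (v (3*((i:ℤ)+1)+1)) = chi (v (3*(i:ℤ))) (v (3*(i:ℤ)+1)) :=
        hperiodE v h (3*(i:ℤ)) _ _ _ _ (by ring) (by ring) (by ring) (by ring)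
      have q2 : chi (v (3*((i:ℤ)+1)+1)) (v (3*((i:ℤ)+1)+2)) = chi (v (3*(i:ℤ)+1)) (v (3*(i:ℤ)+2)) :=
        hperiodE v h (3*(i:ℤ)+1) _ _ _ _ (by ring) (by ring) (by ring) (by ring)
      have q3 : chi (v (3*((i:ℤ)+1)+2)) (v (3*((i:ℤ)+1)+3)) = chi (v (3*(i:ℤ)+2)) (v (3*(i:ℤ)+3)) :=
        hperiodE v h (3*(i:ℤ)+2) _ _ _ _ (by ring) (by ring) (by ring) (by ring)
      exact ⟨q1.trans ih.1, q2.trans ih.2.1, q3.trans ih.2.2⟩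
  | pred i ih =>
      have q1 : chi (v (3*(-(i:ℤ)))) (v (3*(-(i:ℤ))+1)) = chi (v (3*(-(i:ℤ)-1))) (v (3*(-(i:ℤ)-1)+1)) :=
        hperiodE v h (3*(-(i:ℤ)-1)) _ _ _ _ (by ring) (by ring) (by ring) (by ring)
      have q2 : chi (v (3*(-(i:ℤ))+1)) (v (3*(-(i:ℤ))+2)) = chi (v (3*(-(i:ℤ)-1)+1)) (v (3*(-(i:ℤ)-1)+2)) :=
        hperiodE v h (3*(-(i:ℤ)-1)+1) _ _ _ _ (by ring) (by ring) (by ring) (by ring)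
      have q3 : chi (v (3*(-(i:ℤ))+2)) (v (3*(-(i:ℤ))+3)) = chi (v (3*(-(i:ℤ)-1)+2)) (v (3*(-(i:ℤ)-1)+3)) :=
        hperiodE v h (3*(-(i:ℤ)-1)+2) _ _ _ _ (by ring) (by ring) (by ring) (by ring)
      exact ⟨q1.symm.trans ih.1, q2.symm.trans ih.2.1, q3.symm.trans ih.2.2⟩

lemma avalE (v : ℤ → ℤ × ℤ) (h : ThreeHelical v) (m x : ℤ) (hx : x = m + 1) :
    chi (v m) (v x) = chi (v 0) (v 1) ∨ chi (v m) (v x) = chi (v 1) (v 2) ∨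
      chi (v m) (v x) = chi (v 2) (v 3) := by
  subst hx
  have hm : m % 3 = 0 ∨ m % 3 = 1 ∨ m % 3 = 2 := by omega
  rcases hm with hr | hr | hr
  · obtain ⟨k, hk⟩ : ∃ k : ℤ, m = 3*k := ⟨m/3, by omega⟩
    subst hk
    exact Or.inl (aval3 v h k).1
  · obtain ⟨k, hk⟩ : ∃ k : ℤ, m = 3*k+1 := ⟨m/3, by omega⟩
    subst hk
    refine Or.inr (Or.inl ?_)
    have := (aval3 v h k).2.1
    simp only [show (3*k+1+1 : ℤ) = 3*k+2 from by ring]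
    exact this
  · obtain ⟨k, hk⟩ : ∃ k : ℤ, m = 3*k+2 := ⟨m/3, by omega⟩
    subst hk
    refine Or.inr (Or.inr ?_)
    have := (aval3 v h k).2.2
    simp only [show (3*k+2+1 : ℤ) = 3*k+3 from by ring]
    exact this
def pseq (v : ℤ → ℤ × ℤ) (i s : ℤ) (n : ℕ) : ℤ := chi (v i) (v (s + 3 * (n:ℤ)))

lemma pseq_rec (v : ℤ → ℤ × ℤ) (K : ℤ) (hK : ∀ m : ℤ, v (m+6) + v m = K • v (m+3))
    (i s : ℤ) (n : ℕ) :
    pseq v i s (n+2) = K * pseq v i s (n+1) - pseq v i s n := by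
  have hh := chi_add_smul (v i) _ _ _ K (hK (s + 3*(n:ℤ)))
  simp only [pseq]
  push_cast
  rw [show s + 3*((n:ℤ)+2) = s + 3*(n:ℤ) + 6 from by ring,
    show s + 3*((n:ℤ)+1) = s + 3*(n:ℤ) + 3 from by ring]
  linarith

lemma ap_lin (p : ℕ → ℤ) (hp : ∀ n, p (n+2) = 2 * p (n+1) - p n) :
    ∀ n : ℕ, p n = p 0 + (n:ℤ) * (p 1 - p 0) := by
  have key : ∀ n : ℕ, p n = p 0 + (n:ℤ) * (p 1 - p 0) ∧
      p (n+1) = p 0 + ((n:ℤ)+1) * (p 1 - p 0) := by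
    intro n
    induction n with
    | zero => constructor <;> push_cast <;> ring
    | succ k ih =>
        refine ⟨by push_cast; exact ih.2, ?_⟩
        rw [hp k, ih.1, ih.2]
        push_cast
        ring
  exact fun n => (key n).1

lemma K_ge_2 (p : ℕ → ℤ) (K : ℤ) (hp : ∀ n, p (n+2) = K * p (n+1) - p n) (h0 : p 0 = 0)
    (hpos : ∀ n : ℕ, 1 ≤ n → 1 ≤ p n) : 2 ≤ K := by
  by_contra hc
  push_neg at hc
  have hK1 : K ≤ 1 := by omega
  have e2 := hp 0
  have e3 := hp 1
  rw [h0] at e2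
  have h1 := hpos 1 le_rfl
  have h3 := hpos 3 (by norm_num)
  have h2 := hpos 2 (by norm_num)
  have q1 : 0 ≤ (1-K) * p 1 := mul_nonneg (by linarith) (by linarith)
  have q2 : 0 ≤ (1-K) * p 2 := mul_nonneg (by linarith) (by linarith)
  nlinarith [e2, e3, q1, q2, h1, h3]

lemma exp_lower (p : ℕ → ℤ) (K : ℤ) (hK : 3 ≤ K) (hp : ∀ n, p (n+2) = K * p (n+1) - p n)
    (h0 : p 0 = 0) (hpos : ∀ n : ℕ, 1 ≤ n → 1 ≤ p n) :
    ∀ n : ℕ, 1 ≤ n → 2^(n-1) ≤ p n := by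
  have key : ∀ n : ℕ, 1 ≤ n → 2^(n-1) ≤ p n ∧ 2 * p n ≤ p (n+1) := by
    intro n hn
    induction n, hn using Nat.le_induction with
    | base =>
        have h1 := hpos 1 le_rfl
        refine ⟨by simpa using h1, ?_⟩
        have e2 := hp 0
        rw [h0] at e2
        nlinarith [mul_nonneg (show (0:ℤ) ≤ K - 2 from by linarith)
          (show (0:ℤ) ≤ p 1 from by linarith)]
    | succ k hk ih =>
        have hk1 : 1 ≤ p k := hpos k hk
        have hk2 : 1 ≤ p (k+1) := hpos (k+1) (by omega)
        have hstep : (2:ℤ)^(k+1-1) = 2 * 2^(k-1) := by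
          rw [show k+1-1 = k-1+1 from by omega]; ring
        refine ⟨?_, ?_⟩
        · rw [hstep]
          calc 2 * 2^(k-1) ≤ 2 * p k := by linarith [ih.1]
            _ ≤ p (k+1) := ih.2
        · have e2 := hp k
          nlinarith [ih.2, mul_nonneg (show (0:ℤ) ≤ K - 3 from by linarith)
            (show (0:ℤ) ≤ p (k+1) from by linarith)]
  exact fun n hn => (key n hn).1
set_option maxHeartbeats 2000000 in
lemma chi_six (v : ℤ → ℤ × ℤ) (h : ThreeHelical v)
    (hpos : ∀ i j : ℤ, i < j → 0 < chi (v i) (v j)) (m k : ℤ) (hk1 : 1 ≤ k) (hk6 : k ≤ 6) :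
    chi (v m) (v (m+k)) ≤
      (chi (v 0) (v 1) + chi (v 1) (v 2) + chi (v 2) (v 3))^6 +
      (chi (v 0) (v 1) + chi (v 1) (v 2) + chi (v 2) (v 3))^5 +
      (chi (v 0) (v 1) + chi (v 1) (v 2) + chi (v 2) (v 3))^4 +
      4*(chi (v 0) (v 1) + chi (v 1) (v 2) + chi (v 2) (v 3))^3 +
      3*(chi (v 0) (v 1) + chi (v 1) (v 2) + chi (v 2) (v 3))^2 +
      (chi (v 0) (v 1) + chi (v 1) (v 2) + chi (v 2) (v 3)) := by
  have d1 : 1 ≤ chi (v 0) (v 1) := one_le_of_pos (hpos 0 1 (by norm_num))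
  have d2 : 1 ≤ chi (v 1) (v 2) := one_le_of_pos (hpos 1 2 (by norm_num))
  have d3 : 1 ≤ chi (v 2) (v 3) := one_le_of_pos (hpos 2 3 (by norm_num))
  set S := chi (v 0) (v 1) + chi (v 1) (v 2) + chi (v 2) (v 3) with hSdef
  have hS3 : 3 ≤ S := by rw [hSdef]; linarith
  have bA : chi (v m) (v (m+1)) ≤ S := by
    rcases avalE v h m (m+1) rfl with e | e | e <;> rw [e, hSdef] <;> linarith
  have bB : chi (v (m+1)) (v (m+2)) ≤ S := by
    rcases avalE v h (m+1) (m+2) (by ring) with e | e | e <;> rw [e, hSdef] <;> linarith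
  have bC : chi (v (m+2)) (v (m+3)) ≤ S := by
    rcases avalE v h (m+2) (m+3) (by ring) with e | e | e <;> rw [e, hSdef] <;> linarith
  have a1 : 1 ≤ chi (v m) (v (m+1)) := one_le_of_pos (hpos m (m+1) (by linarith))
  have a2 : 1 ≤ chi (v (m+1)) (v (m+2)) := one_le_of_pos (hpos (m+1) (m+2) (by linarith))
  have a3 : 1 ≤ chi (v (m+2)) (v (m+3)) := one_le_of_pos (hpos (m+2) (m+3) (by linarith))
  have c2 : 1 ≤ chi (v m) (v (m+2)) := one_le_of_pos (hpos m (m+2) (by linarith))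
  have c3 : 1 ≤ chi (v m) (v (m+3)) := one_le_of_pos (hpos m (m+3) (by linarith))
  have c4 : 1 ≤ chi (v m) (v (m+4)) := one_le_of_pos (hpos m (m+4) (by linarith))
  have c5 : 1 ≤ chi (v m) (v (m+5)) := one_le_of_pos (hpos m (m+5) (by linarith))
  have pA : chi (v (m+3)) (v (m+4)) = chi (v m) (v (m+1)) :=
    hperiodE v h m _ _ _ _ rfl rfl rfl rfl
  have pB : chi (v (m+4)) (v (m+5)) = chi (v (m+1)) (v (m+2)) :=
    hperiodE v h (m+1) _ _ _ _ (by ring) (by ring) rfl (by ring)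
  have pC : chi (v (m+5)) (v (m+6)) = chi (v (m+2)) (v (m+3)) :=
    hperiodE v h (m+2) _ _ _ _ (by ring) (by ring) rfl (by ring)
  have hv2 : chi (v m) (v (m+2)) =
      chi (v m) (v (m+1)) * chi (v (m+1)) (v (m+2)) - chi (v (m+2)) (v (m+3)) := by
    have := hcoeff v h m; linarith
  have e3 := hstepE v h (v m) m (m+1) (m+2) (m+3) rfl rfl rfl
  rw [chi_self] at e3
  have e4 := hstepE v h (v m) (m+1) (m+2) (m+3) (m+4) (by ring) (by ring) (by ring)
  rw [pA] at e4
  have e5 := hstepE v h (v m) (m+2) (m+3) (m+4) (m+5) (by ring) (by ring) (by ring)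
  rw [pB] at e5
  have e6 := hstepE v h (v m) (m+3) (m+4) (m+5) (m+6) (by ring) (by ring) (by ring)
  rw [pA, pC] at e6
  have b2 : chi (v m) (v (m+2)) ≤ S^2 := by
    nlinarith [hv2, mul_le_mul bA bB (by linarith) (by linarith), a3]
  have b3 : chi (v m) (v (m+3)) ≤ S^3 := by
    nlinarith [e3, mul_le_mul bC b2 (by linarith : (0:ℤ) ≤ chi (v m) (v (m+2)))
      (by linarith : (0:ℤ) ≤ S),
      mul_nonneg (by linarith : (0:ℤ) ≤ chi (v m) (v (m+1)))
        (by linarith : (0:ℤ) ≤ chi (v m) (v (m+1)))]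
  have b4 : chi (v m) (v (m+4)) ≤ S + S^4 := by
    nlinarith [e4, bA, mul_le_mul bA b3 (by linarith : (0:ℤ) ≤ chi (v m) (v (m+3)))
      (by linarith : (0:ℤ) ≤ S),
      mul_nonneg (by linarith : (0:ℤ) ≤ chi (v (m+1)) (v (m+2)))
        (by linarith : (0:ℤ) ≤ chi (v m) (v (m+2)))]
  have b5 : chi (v m) (v (m+5)) ≤ 2*S^2 + S^5 := by
    nlinarith [e5, b2, mul_le_mul bB b4 (by linarith : (0:ℤ) ≤ chi (v m) (v (m+4)))
      (by linarith : (0:ℤ) ≤ S),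
      mul_nonneg (by linarith : (0:ℤ) ≤ chi (v (m+2)) (v (m+3)))
        (by linarith : (0:ℤ) ≤ chi (v m) (v (m+3)))]
  have b6 : chi (v m) (v (m+6)) ≤ 3*S^3 + S^6 := by
    nlinarith [e6, b3, mul_le_mul bC b5 (by linarith : (0:ℤ) ≤ chi (v m) (v (m+5)))
      (by linarith : (0:ℤ) ≤ S),
      mul_nonneg (by linarith : (0:ℤ) ≤ chi (v m) (v (m+1)))
        (by linarith : (0:ℤ) ≤ chi (v m) (v (m+4)))]
  have n2 : (0:ℤ) ≤ S^2 := pow_nonneg (by linarith) 2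
  have n3 : (0:ℤ) ≤ S^3 := pow_nonneg (by linarith) 3
  have n4 : (0:ℤ) ≤ S^4 := pow_nonneg (by linarith) 4
  have n5 : (0:ℤ) ≤ S^5 := pow_nonneg (by linarith) 5
  have n6 : (0:ℤ) ≤ S^6 := pow_nonneg (by linarith) 6
  interval_cases k
  · linarith
  · linarith
  · linarith
  · linarith
  · linarith
  · linarith
set_option maxHeartbeats 1000000 in
/-- Growth dichotomy: for a three-helical sequence with `χ(v(i),v(j)) > 0` for `i < j`,
with `Δᵢ := χ(v(i−1),v(i))`, either we are in the Markov case
`Δ₁² + Δ₂² + Δ₃² = Δ₁Δ₂Δ₃` and the growth is polynomial (quadratically bounded), or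
there is exponential growth along some residue `j ∈ {0,1,2}`. -/
theorem growth_dichotomy (v : ℤ → ℤ × ℤ) (h : ThreeHelical v)
    (hpos : ∀ i j : ℤ, i < j → 0 < chi (v i) (v j)) :
    ((chi (v 0) (v 1)) ^ 2 + (chi (v 1) (v 2)) ^ 2 + (chi (v 2) (v 3)) ^ 2 =
        chi (v 0) (v 1) * chi (v 1) (v 2) * chi (v 2) (v 3) ∧
      ∃ C : ℝ, 0 < C ∧ ∀ i j : ℤ, i < j →
        ((chi (v i) (v j) : ℤ) : ℝ) ≤ C * (1 + ((j - i : ℤ) : ℝ) ^ 2)) ∨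
    (∃ j ∈ ({0, 1, 2} : Set ℤ), ∃ c : ℝ, 1 < c ∧ ∃ N : ℕ, ∀ n : ℕ, N ≤ n →
      c ^ n ≤ ((chi (v j) (v (j + 3 * (n : ℤ))) : ℤ) : ℝ)) := by
  have hA : ∀ m : ℤ, chi (v m) (v (m+1)) ≠ 0 := fun m => ne_of_gt (hpos m (m+1) (by linarith))
  have vec : ∀ m : ℤ, v (m+6) + v m =
      (chi (v 0) (v 1) * chi (v 1) (v 2) * chi (v 2) (v 3) -
        (chi (v 0) (v 1)^2 + chi (v 1) (v 2)^2 + chi (v 2) (v 3)^2) + 2) • v (m+3) := by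
    intro m
    have w6 := vec6 v h m (hA m)
    rw [Kconst v h m] at w6
    exact w6
  have qrec := pseq_rec v _ vec 0 0
  have q0 : pseq v 0 0 0 = 0 := by simp [pseq, chi_self]
  have qpos : ∀ n : ℕ, 1 ≤ n → 1 ≤ pseq v 0 0 n := by
    intro n hn
    refine one_le_of_pos (hpos 0 (0 + 3*(n:ℤ)) ?_)
    have : (1:ℤ) ≤ (n:ℤ) := by exact_mod_cast hn
    linarith
  have hK2 := K_ge_2 _ _ qrec q0 qpos
  rcases eq_or_lt_of_le (by linarith : (0:ℤ) ≤ chi (v 0) (v 1) * chi (v 1) (v 2) * chi (v 2) (v 3) -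
      (chi (v 0) (v 1)^2 + chi (v 1) (v 2)^2 + chi (v 2) (v 3)^2)) with hMar | hExp
  · -- Markov / polynomial case
    left
    have d1 : 1 ≤ chi (v 0) (v 1) := one_le_of_pos (hpos 0 1 (by norm_num))
    have d2 : 1 ≤ chi (v 1) (v 2) := one_le_of_pos (hpos 1 2 (by norm_num))
    have d3 : 1 ≤ chi (v 2) (v 3) := one_le_of_pos (hpos 2 3 (by norm_num))
    refine ⟨by linarith, ?_⟩
    set M : ℤ := (chi (v 0) (v 1) + chi (v 1) (v 2) + chi (v 2) (v 3))^6 +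
      (chi (v 0) (v 1) + chi (v 1) (v 2) + chi (v 2) (v 3))^5 +
      (chi (v 0) (v 1) + chi (v 1) (v 2) + chi (v 2) (v 3))^4 +
      4*(chi (v 0) (v 1) + chi (v 1) (v 2) + chi (v 2) (v 3))^3 +
      3*(chi (v 0) (v 1) + chi (v 1) (v 2) + chi (v 2) (v 3))^2 +
      (chi (v 0) (v 1) + chi (v 1) (v 2) + chi (v 2) (v 3)) with hMdef
    have hS3 : (3:ℤ) ≤ chi (v 0) (v 1) + chi (v 1) (v 2) + chi (v 2) (v 3) := by linarith
    have hMpos : 0 < M := by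
      rw [hMdef]
      have n2 := pow_nonneg (by linarith : (0:ℤ) ≤ chi (v 0) (v 1) + chi (v 1) (v 2) + chi (v 2) (v 3)) 2
      have n3 := pow_nonneg (by linarith : (0:ℤ) ≤ chi (v 0) (v 1) + chi (v 1) (v 2) + chi (v 2) (v 3)) 3
      have n4 := pow_nonneg (by linarith : (0:ℤ) ≤ chi (v 0) (v 1) + chi (v 1) (v 2) + chi (v 2) (v 3)) 4
      have n5 := pow_nonneg (by linarith : (0:ℤ) ≤ chi (v 0) (v 1) + chi (v 1) (v 2) + chi (v 2) (v 3)) 5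
      have n6 := pow_nonneg (by linarith : (0:ℤ) ≤ chi (v 0) (v 1) + chi (v 1) (v 2) + chi (v 2) (v 3)) 6
      linarith
    refine ⟨(M : ℝ), by exact_mod_cast hMpos, ?_⟩
    intro i j hij
    obtain ⟨n, r, hr, hj⟩ : ∃ (n : ℕ) (r : ℤ), (r = 1 ∨ r = 2 ∨ r = 3) ∧
        j = i + r + 3*(n:ℤ) := by
      obtain ⟨n, hn⟩ : ∃ n : ℕ, (n:ℤ) = (j - i - 1)/3 :=
        ⟨((j-i-1)/3).toNat, Int.toNat_of_nonneg (by omega)⟩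
      exact ⟨n, j - i - 3*(n:ℤ), by omega, by ring⟩
    subst hj
    have prec := pseq_rec v _ vec i (i+r)
    have hKK2 : (chi (v 0) (v 1) * chi (v 1) (v 2) * chi (v 2) (v 3) -
        (chi (v 0) (v 1)^2 + chi (v 1) (v 2)^2 + chi (v 2) (v 3)^2) + 2) = 2 := by linarith
    rw [hKK2] at prec
    have plin := ap_lin _ prec
    have hr1 : 1 ≤ r := by rcases hr with e | e | e <;> omega
    have hr3 : r ≤ 3 := by rcases hr with e | e | e <;> omega
    have hp0 : pseq v i (i+r) 0 ≤ M := by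
      have hb := chi_six v h hpos i r hr1 (by omega)
      simp only [pseq]
      norm_num
      rw [hMdef]
      exact hb
    have hp1 : pseq v i (i+r) 1 ≤ M := by
      have hb := chi_six v h hpos i (r+3) (by omega) (by omega)
      rw [show i + (r+3) = i + r + 3 from by ring] at hb
      simp only [pseq]
      norm_num
      rw [hMdef]
      exact hb
    have hq0 : 1 ≤ pseq v i (i+r) 0 := by
      refine one_le_of_pos (hpos i (i + r + 3*((0:ℕ):ℤ)) ?_)
      push_cast
      linarith
    have hnn : (0:ℤ) ≤ (n:ℤ) := Int.natCast_nonneg n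
    have key : pseq v i (i+r) n ≤ M * (1 + (r + 3*(n:ℤ))^2) := by
      have hplin := plin n
      have h1 : pseq v i (i+r) n ≤ pseq v i (i+r) 0 + (n:ℤ) * pseq v i (i+r) 1 := by
        nlinarith [hplin, mul_nonneg hnn (by linarith : (0:ℤ) ≤ pseq v i (i+r) 0)]
      have h2 : (n:ℤ) * pseq v i (i+r) 1 ≤ (n:ℤ) * M := mul_le_mul_of_nonneg_left hp1 hnn
      have hd2 : (n:ℤ) ≤ (r + 3*(n:ℤ))^2 := by nlinarith
      have h3 : (n:ℤ) * M ≤ (r + 3*(n:ℤ))^2 * M := mul_le_mul_of_nonneg_right hd2 (by linarith)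
      linarith [h1, h2, h3, hp0]
    have hgoal : chi (v i) (v (i + r + 3*(n:ℤ))) ≤ M * (1 + (i + r + 3*(n:ℤ) - i)^2) := by
      rw [show i + r + 3*(n:ℤ) - i = r + 3*(n:ℤ) from by ring]
      exact key
    exact_mod_cast hgoal
  · -- exponential case
    right
    have hK3 : 3 ≤ chi (v 0) (v 1) * chi (v 1) (v 2) * chi (v 2) (v 3) -
        (chi (v 0) (v 1)^2 + chi (v 1) (v 2)^2 + chi (v 2) (v 3)^2) + 2 := by linarith
    have grow := exp_lower _ _ hK3 qrec q0 qpos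
    have hc : 1 < Real.sqrt 2 := by
      nlinarith [Real.sq_sqrt (show (0:ℝ) ≤ 2 from by norm_num), Real.sqrt_nonneg 2]
    refine ⟨0, by simp, Real.sqrt 2, hc, 2, ?_⟩
    intro n hn
    have h2 : (2:ℤ)^(n-1) ≤ pseq v 0 0 n := grow n (by omega)
    have hr1 : (Real.sqrt 2)^n ≤ (2:ℝ)^(n-1) := by
      calc (Real.sqrt 2)^n ≤ (Real.sqrt 2)^(2*(n-1)) :=
            pow_le_pow_right₀ (le_of_lt hc) (by omega)
        _ = ((Real.sqrt 2)^2)^(n-1) := by rw [pow_mul]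
        _ = (2:ℝ)^(n-1) := by rw [Real.sq_sqrt (by norm_num : (0:ℝ) ≤ 2)]
    have hcast : ((2:ℝ))^(n-1) ≤ ((pseq v 0 0 n : ℤ) : ℝ) := by exact_mod_cast h2
    calc (Real.sqrt 2)^n ≤ (2:ℝ)^(n-1) := hr1
      _ ≤ ((pseq v 0 0 n : ℤ) : ℝ) := hcast
      _ = _ := rfl
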